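/- arXiv:2009.03215 — 3 statements merged into one kernel-verified Lean document; each statement's English description precedes it below -/
import Mathlib

section
/- Let n ≥ 1, 1 ≤ ℓ ≤ n−1, and w ∈ P_ℓ. If w is not 312-free, then the restriction of w to {1,…,w_1} is w|_{w_1} = (w_1, ℓ, w_1−1, w_1−2, …, ℓ+1, ℓ−1, …, 1); that is, its first entry is w_1, its second entry is ℓ, and the remaining entries are the decreasing arrangement of {1,…,w_1−1} ∖ {ℓ}. -/
open MvPolynomial

/-- Index type for the Plücker variables `P_J`: nonempty proper subsets of `{1,…,n}`
(encoded as `Fin n`, where `i : Fin n` stands for the value `i+1`). -/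
abbrev PIdx (n : ℕ) := {J : Finset (Fin n) // J.Nonempty ∧ J ≠ Finset.univ}

/-- The transposition (1 2) acting on (1-based) row indices. -/
def swap12 (r : ℕ) : ℕ := if r = 1 then 2 else if r = 2 then 1 else r

/-- The image of the Plücker variable `P_J` under the monomial map `φ_ℓ` associated to the
block diagonal matching field `B_ℓ`: writing `J = {j_1 < … < j_k}` (as 1-based values),
it is `sgn(σ)·x_{σ(1),j_1}⋯x_{σ(k),j_k}` where `σ = id` if `|J| = 1` or
`|J ∩ {1,…,ℓ}| ≥ 2`, and `σ = (1 2)` otherwise. Variables `x_{i,j}` are indexed by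
pairs of 1-based natural numbers. -/
noncomputable def phiVal (K : Type*) [CommRing K] (n ℓ : ℕ) (J : Finset (Fin n)) :
    MvPolynomial (ℕ × ℕ) K :=
  let l : List ℕ := (J.sort (· ≤ ·)).map (fun j => (j : ℕ) + 1)
  if J.card = 1 ∨ 2 ≤ (J.filter (fun j : Fin n => (j : ℕ) + 1 ≤ ℓ)).card then
    ((List.range l.length).map
      (fun r => (X (r + 1, l.getD r 0) : MvPolynomial (ℕ × ℕ) K))).prod
  else
    - ((List.range l.length).map
      (fun r => (X (swap12 (r + 1), l.getD r 0) : MvPolynomial (ℕ × ℕ) K))).prod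

/-- The monomial map `φ_ℓ : K[P_J] → K[x_{i,j}]`. -/
noncomputable def phiMap (K : Type*) [CommRing K] (n ℓ : ℕ) :
    MvPolynomial (PIdx n) K →ₐ[K] MvPolynomial (ℕ × ℕ) K :=
  aeval (fun J => phiVal K n ℓ J.1)

/-- The matching field ideal `F_{n,ℓ} = ker φ_ℓ`. -/
noncomputable def Fnl (K : Type*) [CommRing K] (n ℓ : ℕ) :
    Ideal (MvPolynomial (PIdx n) K) :=
  RingHom.ker (phiMap K n ℓ)

/-- Componentwise comparison `A ≤ B` of two finsets via their increasing enumerations. -/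
def finsetLE {n : ℕ} (A B : Finset (Fin n)) : Prop :=
  List.Forall₂ (· ≤ ·) (A.sort (· ≤ ·)) (B.sort (· ≤ ·))

/-- The set `{w_1, …, w_k}` of the first `k` values of the one-line notation of `w`. -/
def initSet {n : ℕ} (w : Equiv.Perm (Fin n)) (k : ℕ) : Finset (Fin n) :=
  (Finset.univ.filter (fun i : Fin n => (i : ℕ) < k)).image w

/-- `S_w`: the set of subsets `J` with `J ≰ {w_1,…,w_{|J|}}`. -/
def Sw {n : ℕ} (w : Equiv.Perm (Fin n)) : Set (Finset (Fin n)) :=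
  {J | ¬ finsetLE J (initSet w J.card)}

/-- Index type for the Plücker variables that do not vanish on the Schubert variety `X(w)`. -/
abbrev RIdx (n : ℕ) (w : Equiv.Perm (Fin n)) := {J : PIdx n // J.1 ∉ Sw w}

open Classical in
/-- The projection `π_w` sending `P_J ↦ 0` for `J ∈ S_w` and `P_J ↦ P_J` otherwise. -/
noncomputable def piw (K : Type*) [CommRing K] {n : ℕ} (w : Equiv.Perm (Fin n)) :
    MvPolynomial (PIdx n) K →ₐ[K] MvPolynomial (RIdx n w) K :=
  aeval (fun J => if h : J.1 ∈ Sw w then 0 else X (⟨J, h⟩ : RIdx n w))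

/-- The restricted matching field ideal `F_{n,ℓ,w} = π_w(F_{n,ℓ})`. -/
noncomputable def Fnlw (K : Type*) [CommRing K] (n ℓ : ℕ) (w : Equiv.Perm (Fin n)) :
    Ideal (MvPolynomial (RIdx n w) K) :=
  Ideal.map (piw K w) (Fnl K n ℓ)

/-- An ideal of a polynomial ring is monomial-free if it contains no (nonzero) monomial. -/
def MonomialFree {σ K : Type*} [CommSemiring K] (I : Ideal (MvPolynomial σ K)) : Prop :=
  ∀ m : σ →₀ ℕ, (monomial m (1 : K)) ∉ I

/-- The adjacent transposition `s_{i+1} = (i+1, i+2)` (1-based), i.e. the swap of the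
0-based positions `i` and `i+1` of `Fin n`. -/
def adjT (n i : ℕ) : Equiv.Perm (Fin n) :=
  if h : i + 1 < n then Equiv.swap ⟨i, Nat.lt_of_succ_lt h⟩ ⟨i + 1, h⟩ else 1

/-- `Z_n`: permutations that are products of adjacent transpositions with pairwise
distance at least 2 between the indices. -/
def Zset (n : ℕ) : Set (Equiv.Perm (Fin n)) :=
  {w | ∃ l : List ℕ, (∀ i ∈ l, i + 1 < n) ∧
        l.Pairwise (fun i j => i + 2 ≤ j ∨ j + 2 ≤ i) ∧
        w = (l.map (adjT n)).prod}

/-- `oneLine w i = w_i` : the `i`-th entry (1-based, with 1-based values) of the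
one-line notation of `w`. -/
def oneLine {n : ℕ} (w : Equiv.Perm (Fin n)) (i : ℕ) : ℕ :=
  if h : i - 1 < n then (w ⟨i - 1, h⟩ : ℕ) + 1 else 0

/-- The (1-based) position `t` with `w_t = n`. -/
def posOfTop {n : ℕ} (w : Equiv.Perm (Fin n)) : ℕ :=
  if h : 0 < n then ((w.symm ⟨n - 1, by omega⟩ : ℕ) + 1) else 0

/-- `deleteTop w u` holds iff `u = ul(w)` is obtained from `w` by deleting the entry `n`
from its one-line notation. -/
def deleteTop {n : ℕ} (w : Equiv.Perm (Fin n)) (u : Equiv.Perm (Fin (n - 1))) : Prop :=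
  ∀ i, 1 ≤ i → i ≤ n - 1 →
    oneLine u i = if i < posOfTop w then oneLine w i else oneLine w (i + 1)

/-- The descending property: writing `w_t = n`, one has `w_t > w_{t+1} > … > w_n`. -/
def descendingProp {n : ℕ} (w : Equiv.Perm (Fin n)) : Prop :=
  ∀ i, posOfTop w ≤ i → i < n → oneLine w (i + 1) < oneLine w i

/-- `T_{n,ℓ}`: the set of permutations `w` for which `F_{n,ℓ,w}` is nonzero and
monomial-free. -/
def Tset (K : Type*) [Field K] (n ℓ : ℕ) : Set (Equiv.Perm (Fin n)) :=
  {w | Fnlw K n ℓ w ≠ ⊥ ∧ MonomialFree (Fnlw K n ℓ w)}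

/-- The one-line notation of `w` as a list of 1-based values. -/
def olList {n : ℕ} (w : Equiv.Perm (Fin n)) : List ℕ :=
  (List.finRange n).map (fun i => (w i : ℕ) + 1)

/-- A list of naturals is 312-free if it has no subsequence of type 312. -/
def List312Free (l : List ℕ) : Prop :=
  ¬ ∃ i j k : ℕ, i < j ∧ j < k ∧ k < l.length ∧
      l.getD j 0 < l.getD k 0 ∧ l.getD k 0 < l.getD i 0

/-- The decreasing list `[a, a-1, …, 1]`. -/
def descTo1 (a : ℕ) : List ℕ := (List.range a).reverse.map (· + 1)

/-- The set `P_ℓ ⊆ S_n`. -/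
def Pset (n ℓ : ℕ) : Set (Equiv.Perm (Fin n)) :=
  if ℓ = n then {w | List312Free (olList w)}
  else
    {w | (¬ List312Free (olList w) →
            oneLine w 2 = ℓ ∧ oneLine w 2 < oneLine w 1 ∧
            List312Free ((olList w).erase ℓ)) ∧
         (∀ m, 3 ≤ m → m ≤ n →
            (olList w).filter (fun v => v ≤ m) = (m - 1) :: m :: descTo1 (m - 2) →
            oneLine w 1 < oneLine w 2 ∧ oneLine w 2 ≤ ℓ ∧
            (olList w).filter (fun v => v ≤ oneLine w 2) =
              oneLine w 1 :: oneLine w 2 ::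
                ((descTo1 (oneLine w 2 - 1)).filter (fun v => v ≠ oneLine w 1)))}

/-- The set `A_1`. -/
def A1set (n : ℕ) : Set (Equiv.Perm (Fin n)) :=
  {w | (∃ u : Equiv.Perm (Fin (n - 1)), deleteTop w u ∧ u ∈ Zset (n - 1)) ∧
       oneLine w n = n - 2 ∧
       ({oneLine w (n - 2), oneLine w (n - 1)} : Set ℕ) = {n - 1, n}}

/-- The set `A_2` (with `ul(w) ∈ T_{n-1,ℓ'}`). -/
def A2set (K : Type*) [Field K] (n ℓ' : ℕ) : Set (Equiv.Perm (Fin n)) :=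
  {w | (∃ u : Equiv.Perm (Fin (n - 1)),
          deleteTop w u ∧ u ∈ Tset K (n - 1) ℓ' ∧ descendingProp u) ∧
       (∀ s t, 1 ≤ s → s ≤ n → 1 ≤ t → t ≤ n →
          oneLine w s = n - 1 → oneLine w t = n → s - 1 ≤ t)}


private lemma descTo1_pairwise (b : ℕ) : (descTo1 b).Pairwise (· > ·) := by
  unfold descTo1
  rw [List.pairwise_map, List.pairwise_reverse]
  exact (List.pairwise_lt_range (n := b)).imp (fun h => by omega)

private lemma descTo1_mem (b v : ℕ) : v ∈ descTo1 b ↔ 1 ≤ v ∧ v ≤ b := by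
  unfold descTo1
  simp only [List.mem_map, List.mem_reverse, List.mem_range]
  constructor
  · rintro ⟨x, hx, rfl⟩; omega
  · rintro ⟨h1, h2⟩; exact ⟨v - 1, by omega, by omega⟩

private lemma key312 (a l n : ℕ) (T : List ℕ)
    (hnd : (a :: l :: T).Nodup)
    (hmem : ∀ v, v ∈ a :: l :: T ↔ 1 ≤ v ∧ v ≤ n)
    (hla : l < a)
    (h312 : List312Free (a :: T)) :
    (a :: l :: T).filter (fun v => v ≤ a) =
      a :: l :: ((descTo1 (a - 1)).filter (fun v => v ≠ l)) := by
  have hndT : T.Nodup := (List.nodup_cons.mp (List.nodup_cons.mp hnd).2).2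
  have haT : a ∉ T := fun hc => (List.nodup_cons.mp hnd).1 (List.mem_cons_of_mem _ hc)
  have hlT : l ∉ T := (List.nodup_cons.mp (List.nodup_cons.mp hnd).2).1
  have han : a ≤ n := ((hmem a).1 List.mem_cons_self).2
  -- the filtered tail
  set R := T.filter (fun v => v ≤ a) with hR
  have hfilt : (a :: l :: T).filter (fun v => v ≤ a) = a :: l :: R := by
    simp [List.filter_cons, le_of_lt hla, hR]
  rw [hfilt]
  -- 312-freeness gives descending order among values < a in T
  have hT : ∀ p q, p < q → (hq : q < T.length) → (hp : p < T.length) →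
      ¬ (T[p] < T[q] ∧ T[q] < a) := by
    intro p q hpq hq hp hc
    apply h312
    refine ⟨0, p + 1, q + 1, by omega, by omega, by simp; omega, ?_, ?_⟩
    · rw [List.getD_cons_succ, List.getD_cons_succ, List.getD_eq_getElem _ _ hp,
        List.getD_eq_getElem _ _ hq]
      exact hc.1
    · rw [List.getD_cons_succ, List.getD_cons_zero, List.getD_eq_getElem _ _ hq]
      exact hc.2
  have hTP : T.Pairwise (fun u v => u < a → v < a → v < u) := by
    rw [List.pairwise_iff_getElem]
    intro i j hi hj hij hu hv
    have h1 := hT i j hij hj hi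
    have h2 : T[i] ≠ T[j] := by
      have := List.pairwise_iff_getElem.mp (hndT : T.Pairwise (· ≠ ·)) i j hi hj hij
      exact this
    omega
  have hRsub : R.Sublist T := List.filter_sublist (l := T)
  have hRlt : ∀ v ∈ R, v < a := by
    intro v hv
    have := List.mem_filter.mp hv
    have hva : v ≤ a := by simpa using this.2
    have : v ≠ a := fun hc => haT (hc ▸ this.1)
    omega
  have hRP : R.Pairwise (· > ·) := by
    refine (hTP.sublist hRsub).imp_of_mem ?_
    intro u v hu hv huv
    exact huv (hRlt u hu) (hRlt v hv)
  have hRnd : R.Nodup := hndT.sublist hRsub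
  have hRmem : ∀ v, v ∈ R ↔ (1 ≤ v ∧ v < a) ∧ v ≠ l := by
    intro v
    constructor
    · intro hv
      have hT' := (List.mem_filter.mp hv).1
      have h1 := (hmem v).1 (List.mem_cons_of_mem _ (List.mem_cons_of_mem _ hT'))
      exact ⟨⟨h1.1, hRlt v hv⟩, fun hc => hlT (hc ▸ hT')⟩
    · rintro ⟨⟨h1, h2⟩, h3⟩
      have hv : v ∈ a :: l :: T := (hmem v).2 ⟨h1, by omega⟩
      have hvT : v ∈ T := by
        rcases List.mem_cons.mp hv with hc | hv2
        · omega
        rcases List.mem_cons.mp hv2 with hc | hv3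
        · exact absurd hc h3
        · exact hv3
      exact List.mem_filter.mpr ⟨hvT, by simpa using le_of_lt h2⟩
  -- the right-hand side list
  set D := (descTo1 (a - 1)).filter (fun v => v ≠ l) with hD
  have hDsub : D.Sublist (descTo1 (a - 1)) := List.filter_sublist
  have hDP : D.Pairwise (· > ·) := (descTo1_pairwise (a - 1)).sublist hDsub
  have hDnd : D.Nodup := ((descTo1_pairwise (a - 1)).imp (fun h => ne_of_gt h)).sublist hDsub
  have hDmem : ∀ v, v ∈ D ↔ (1 ≤ v ∧ v < a) ∧ v ≠ l := by
    intro v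
    rw [hD, List.mem_filter]
    simp only [descTo1_mem, decide_eq_true_eq]
    omega
  have htof : R.toFinset = D.toFinset := by
    ext v
    simp only [List.mem_toFinset, hRmem, hDmem]
  have hperm : R.Perm D := List.perm_of_nodup_nodup_toFinset_eq hRnd hDnd htof
  haveI : IsAntisymm ℕ (· > ·) := ⟨fun a b h1 h2 => absurd h2 (not_lt.2 (le_of_lt h1))⟩
  have : R = D := List.Perm.eq_of_pairwise' hRP hDP hperm
  rw [this]

theorem stmt17 (n ℓ : ℕ) (hn : 1 ≤ n) (h1 : 1 ≤ ℓ) (h2 : ℓ ≤ n - 1)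
    (w : Equiv.Perm (Fin n)) (hw : w ∈ Pset n ℓ) (h : ¬ List312Free (olList w)) :
    (olList w).filter (fun v => v ≤ oneLine w 1) =
      oneLine w 1 :: ℓ :: ((descTo1 (oneLine w 1 - 1)).filter (fun v => v ≠ ℓ)) := by
  have hn2 : 2 ≤ n := by omega
  have hln : ℓ ≠ n := by omega
  rw [Pset, if_neg hln, Set.mem_setOf_eq] at hw
  obtain ⟨h2l, hlt, h312⟩ := hw.1 h
  have hlen : (olList w).length = n := by simp [olList]
  have hmem : ∀ v, v ∈ olList w ↔ 1 ≤ v ∧ v ≤ n := by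
    intro v
    simp only [olList, List.mem_map, List.mem_finRange, true_and]
    constructor
    · rintro ⟨i, rfl⟩
      have := (w i).isLt; omega
    · rintro ⟨h1, h2⟩
      refine ⟨w.symm ⟨v - 1, by omega⟩, ?_⟩
      rw [Equiv.apply_symm_apply]; simp; omega
  have hnd : (olList w).Nodup := by
    refine List.Nodup.map ?_ (List.nodup_finRange n)
    intro i j hij
    dsimp only at hij
    exact w.injective (Fin.ext (by omega))
  have hgetD : ∀ i, (hi : i < n) → (olList w).getD i 0 = (w ⟨i, hi⟩ : ℕ) + 1 := by
    intro i hi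
    rw [List.getD_eq_getElem _ _ (by omega : i < (olList w).length)]
    simp [olList, List.getElem_finRange, Fin.cast]
  have ho1 : oneLine w 1 = (olList w).getD 0 0 := by
    rw [oneLine, dif_pos (by omega : 1 - 1 < n), hgetD 0 (by omega)]
  have ho2 : oneLine w 2 = (olList w).getD 1 0 := by
    rw [oneLine, dif_pos (by omega : 2 - 1 < n), hgetD 1 (by omega)]
  obtain ⟨x, y, T, hL⟩ : ∃ x y T, olList w = x :: y :: T := by
    rcases hE : olList w with _ | ⟨x, rest⟩
    · rw [hE] at hlen; simp at hlen; omega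
    · rcases hF : rest with _ | ⟨y, T⟩
      · rw [hE, hF] at hlen; simp at hlen; omega
      · exact ⟨x, y, T, rfl⟩
  have hx : oneLine w 1 = x := by rw [ho1, hL]; rfl
  have hy : y = ℓ := by rw [← h2l, ho2, hL]; rfl
  have hL' : olList w = x :: ℓ :: T := by rw [hL, hy]
  have hla : ℓ < x := by rw [← hx]; omega
  have herase : (olList w).erase ℓ = x :: T := by
    rw [hL', List.erase_cons_tail (by simp; omega), List.erase_cons_head]
  rw [herase] at h312
  rw [hx, hL']
  exact key312 x ℓ n T (hL' ▸ hnd) (fun v => (hL' ▸ hmem v)) hla h312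
end

section
/- Let n ≥ 1, 1 ≤ ℓ ≤ n, w ∈ P_ℓ, and t ≥ 2 with t ≤ n. Write ŵ_1 = min{w_1,…,w_t} and ŵ_2 = min({w_1,…,w_t} ∖ {ŵ_1}) for the two smallest values among the first t entries of w. If ŵ_1 ≥ 2 and ŵ_2 > ŵ_1 + 1, then either ŵ_1 = w_1 < ŵ_2 ≤ w_2 ≤ ℓ, or w_1 > w_2 = ℓ = ŵ_1. -/
open MvPolynomial

section Stmt18Helpers

lemma olList_length {n : ℕ} (w : Equiv.Perm (Fin n)) : (olList w).length = n := by
  simp [olList]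

lemma oneLine_succ {n : ℕ} (w : Equiv.Perm (Fin n)) (i : ℕ) (h : i < n) :
    oneLine w (i + 1) = (w ⟨i, h⟩ : ℕ) + 1 := by
  simp only [oneLine, Nat.add_sub_cancel, dif_pos h]

lemma olList_getD {n : ℕ} (w : Equiv.Perm (Fin n)) (i : ℕ) (h : i < n) :
    (olList w).getD i 0 = oneLine w (i + 1) := by
  have hl : i < (olList w).length := by rw [olList_length]; exact h
  rw [List.getD_eq_getElem _ _ hl, oneLine_succ w i h]
  simp [olList]

lemma oneLine_bounds {n : ℕ} (w : Equiv.Perm (Fin n)) {i : ℕ} (h : i - 1 < n) :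
    1 ≤ oneLine w i ∧ oneLine w i ≤ n := by
  simp only [oneLine, dif_pos h]
  exact ⟨by omega, by have := (w ⟨i - 1, h⟩).isLt; omega⟩

lemma oneLine_inj {n : ℕ} (w : Equiv.Perm (Fin n)) {i j : ℕ} (hi : i < n) (hj : j < n)
    (h : oneLine w (i + 1) = oneLine w (j + 1)) : i = j := by
  rw [oneLine_succ w i hi, oneLine_succ w j hj] at h
  have h2 : w ⟨i, hi⟩ = w ⟨j, hj⟩ := by
    apply Fin.ext; omega
  have := w.injective h2
  simpa using congrArg Fin.val this

/-- The 0-based position of the (1-based) value `v` in the one-line notation of `w`. -/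
def posOfVal {n : ℕ} (w : Equiv.Perm (Fin n)) (v : ℕ) : ℕ :=
  if h : v - 1 < n then (w.symm ⟨v - 1, h⟩ : ℕ) else 0

lemma posOfVal_lt {n : ℕ} (w : Equiv.Perm (Fin n)) {v : ℕ} (h1 : 1 ≤ v) (h2 : v ≤ n) :
    posOfVal w v < n := by
  have h : v - 1 < n := by omega
  simp only [posOfVal, dif_pos h]
  exact (w.symm ⟨v - 1, h⟩).isLt

lemma oneLine_posOfVal {n : ℕ} (w : Equiv.Perm (Fin n)) {v : ℕ} (h1 : 1 ≤ v) (h2 : v ≤ n) :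
    oneLine w (posOfVal w v + 1) = v := by
  have h : v - 1 < n := by omega
  have hp : posOfVal w v = (w.symm ⟨v - 1, h⟩ : ℕ) := by simp [posOfVal, dif_pos h]
  rw [oneLine_succ w _ (posOfVal_lt w h1 h2)]
  have he : (⟨posOfVal w v, posOfVal_lt w h1 h2⟩ : Fin n) = w.symm ⟨v - 1, h⟩ :=
    Fin.ext (by simpa using hp)
  rw [he, Equiv.apply_symm_apply]
  simp
  omega

lemma not_free_intro {l : List ℕ} {i j k : ℕ} (hij : i < j) (hjk : j < k) (hk : k < l.length)
    (h1 : l.getD j 0 < l.getD k 0) (h2 : l.getD k 0 < l.getD i 0) : ¬ List312Free l :=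
  fun hf => hf ⟨i, j, k, hij, hjk, hk, h1, h2⟩

lemma getD_shift (x : ℕ) (l : List ℕ) (js : List ℕ) (h1 : ∀ j ∈ js, 1 ≤ j) :
    js.map (fun i => (x :: l).getD i 0) = (js.map (fun j => j - 1)).map (fun i => l.getD i 0) := by
  rw [List.map_map]
  apply List.map_congr_left
  intro j hj
  have hj1 : 1 ≤ j := h1 j hj
  simp only [Function.comp_apply]
  conv_lhs => rw [show j = (j - 1) + 1 by omega]
  rw [List.getD_cons_succ]

lemma getD_sublist : ∀ (l : List ℕ) (is : List ℕ), is.Pairwise (· < ·) →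
    (∀ i ∈ is, i < l.length) → (is.map (fun i => l.getD i 0)).Sublist l := by
  intro l
  induction l with
  | nil =>
    intro is _ hb
    cases is with
    | nil => simp
    | cons i is' => exact absurd (hb i (by simp)) (by simp)
  | cons x l ih =>
    intro is hp hb
    cases is with
    | nil => simp
    | cons i is' =>
      rcases List.pairwise_cons.mp hp with ⟨hlt, hp'⟩
      by_cases hi : i = 0
      · subst hi
        have h1 : ∀ j ∈ is', 1 ≤ j := fun j hj => hlt j hj
        rw [List.map_cons, List.getD_cons_zero, getD_shift x l is' h1]
        refine List.Sublist.cons₂ x (ih _ ?_ ?_)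
        · refine List.pairwise_map.mpr (hp'.imp_of_mem ?_)
          intro c d hc hd hcd
          have := h1 c hc
          omega
        · intro j hj
          rcases List.mem_map.mp hj with ⟨j', hj', rfl⟩
          have hb' := hb j' (List.mem_cons_of_mem _ hj')
          have h1' := h1 j' hj'
          rw [List.length_cons] at hb'
          omega
      · have h1 : ∀ j ∈ i :: is', 1 ≤ j := by
          intro j hj
          rcases List.mem_cons.mp hj with rfl | hj
          · omega
          · have := hlt j hj; omega
        rw [getD_shift x l _ h1]
        refine List.Sublist.cons x (ih _ ?_ ?_)
        · refine List.pairwise_map.mpr (hp.imp_of_mem ?_)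
          intro c d hc hd hcd
          have := h1 c hc
          omega
        · intro j hj
          rcases List.mem_map.mp hj with ⟨j', hj', rfl⟩
          have hb' := hb j' hj'
          have h1' := h1 j' hj'
          rw [List.length_cons] at hb'
          omega

lemma descTo1_succ (m : ℕ) : descTo1 (m + 1) = (m + 1) :: descTo1 m := by
  simp [descTo1, List.range_succ]

lemma descTo1_length (m : ℕ) : (descTo1 m).length = m := by simp [descTo1]

lemma mem_descTo1 {m x : ℕ} (h : x ∈ descTo1 m) : 1 ≤ x ∧ x ≤ m := by
  simp [descTo1] at h
  rcases h with ⟨k, hk, rfl⟩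
  omega

lemma descTo1_eq (m : ℕ) : descTo1 m = (List.range m).map (fun k => m - k) := by
  induction m with
  | zero => rfl
  | succ m ih =>
    rw [descTo1_succ, List.range_succ_eq_map, List.map_cons, ih, List.map_map]
    simp only [Nat.sub_zero]
    congr 1
    apply List.map_congr_left
    intro k hk
    simp only [Function.comp_apply]
    omega

lemma filter_le_length {n : ℕ} (w : Equiv.Perm (Fin n)) (m : ℕ) (hm : m ≤ n) :
    ((olList w).filter (fun v => v ≤ m)).length = m := by
  have h1 : olList w = ((List.finRange n).map ⇑w).map (fun i : Fin n => (i : ℕ) + 1) := by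
    rw [List.map_map]; rfl
  have h2 : (List.finRange n).map (fun i : Fin n => (i : ℕ) + 1)
      = (List.range n).map (· + 1) := by
    exact List.ext_getElem (by simp) (by intro i h1 h2; simp)
  have hperm : (olList w).Perm ((List.range n).map (· + 1)) := by
    rw [h1, ← h2]
    exact (w.map_finRange_perm).map _
  rw [← List.countP_eq_length_filter, hperm.countP_eq, List.countP_map]
  obtain ⟨r, rfl⟩ : ∃ r, n = m + r := ⟨n - m, by omega⟩
  rw [List.range_add, List.countP_append, List.countP_map,
    List.countP_eq_length.mpr ?h1, List.countP_eq_zero.mpr ?h2, List.length_range]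
  · omega
  case h1 =>
    intro x hx
    rw [List.mem_range] at hx
    simp only [Function.comp_apply, decide_eq_true_eq]
    omega
  case h2 =>
    intro x hx
    rw [List.mem_range] at hx
    simp only [Function.comp_apply, decide_eq_true_eq]
    omega

end Stmt18Helpers

theorem stmt18 (n ℓ : ℕ) (hn : 1 ≤ n) (h1 : 1 ≤ ℓ) (h2 : ℓ ≤ n)
    (w : Equiv.Perm (Fin n)) (hw : w ∈ Pset n ℓ)
    (t : ℕ) (ht2 : 2 ≤ t) (htn : t ≤ n)
    (a b : ℕ)
    (ha : a ∈ (Finset.Icc 1 t).image (oneLine w))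
    (hb : b ∈ (Finset.Icc 1 t).image (oneLine w))
    (hmin : ∀ c ∈ (Finset.Icc 1 t).image (oneLine w), a ≤ c)
    (hsec : ∀ c ∈ (Finset.Icc 1 t).image (oneLine w), c ≠ a → b ≤ c)
    (hba : b ≠ a) (ha2 : 2 ≤ a) (hgap : a + 1 < b) :
    (a = oneLine w 1 ∧ a < b ∧ b ≤ oneLine w 2 ∧ oneLine w 2 ≤ ℓ) ∨
    (oneLine w 2 < oneLine w 1 ∧ oneLine w 2 = ℓ ∧ ℓ = a) := by
  classical
  have hn2 : 2 ≤ n := le_trans ht2 htn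
  have e01 : (0 : ℕ) + 1 = 1 := rfl
  have e12 : (1 : ℕ) + 1 = 2 := rfl
  have hmem : ∀ i : ℕ, i < t → oneLine w (i + 1) ∈ (Finset.Icc 1 t).image (oneLine w) :=
    fun i hi => Finset.mem_image.mpr ⟨i + 1, Finset.mem_Icc.mpr ⟨by omega, by omega⟩, rfl⟩
  obtain ⟨pa, hpa, hpaval⟩ := Finset.mem_image.mp ha
  rw [Finset.mem_Icc] at hpa
  obtain ⟨pb, hpb, hpbval⟩ := Finset.mem_image.mp hb
  rw [Finset.mem_Icc] at hpb
  have han : a ≤ n := by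
    have := oneLine_bounds w (i := pa) (by omega)
    omega
  have hbn : b ≤ n := by
    have := oneLine_bounds w (i := pb) (by omega)
    omega
  set p := pa - 1 with hpdef
  have hpval : oneLine w (p + 1) = a := by
    rw [show p + 1 = pa by omega]
    exact hpaval
  have hpt : p < t := by omega
  set q := posOfVal w (a + 1) with hqdef
  have hqn : q < n := posOfVal_lt w (by omega) (by omega)
  have hqval : oneLine w (q + 1) = a + 1 := oneLine_posOfVal w (by omega) (by omega)
  have hqt : t ≤ q := by
    by_contra hcon
    push_neg at hcon
    have hm := hmem q hcon
    rw [hqval] at hm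
    have := hsec _ hm (by omega)
    omega
  have hsmall : ∀ v, 1 ≤ v → v < a →
      t ≤ posOfVal w v ∧ posOfVal w v < n ∧ oneLine w (posOfVal w v + 1) = v := by
    intro v h1 h2
    have hlt : posOfVal w v < n := posOfVal_lt w h1 (by omega)
    have hval : oneLine w (posOfVal w v + 1) = v := oneLine_posOfVal w h1 (by omega)
    refine ⟨?_, hlt, hval⟩
    by_contra hcon
    push_neg at hcon
    have hm := hmem _ hcon
    rw [hval] at hm
    have := hmin _ hm
    omega
  by_cases hfree : List312Free (olList w)
  · -- the 312-free case
    have hw1 : oneLine w 1 = a := by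
      by_contra hne
      have hm1 := hmem 0 (by omega)
      have hb1 := hsec _ hm1 (by rw [e01]; exact hne)
      have hp0 : p ≠ 0 := by
        intro h
        rw [h, e01] at hpval
        exact hne hpval
      refine not_free_intro (i := 0) (j := p) (k := q) (by omega) (by omega)
        (by rw [olList_length]; omega) ?_ ?_ hfree
      · rw [olList_getD w p (by omega), olList_getD w q hqn, hpval, hqval]
        omega
      · rw [olList_getD w q hqn, olList_getD w 0 (by omega), hqval]
        omega
    have hw2ne : oneLine w 2 ≠ a := by
      intro h
      have : (1 : ℕ) = 0 := oneLine_inj w (by omega) (by omega)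
        (by rw [e12, e01, h, hw1])
      omega
    have hm2 := hmem 1 (by omega)
    rw [e12] at hm2
    have hbw2 : b ≤ oneLine w 2 := hsec _ hm2 hw2ne
    by_cases hln : ℓ = n
    · left
      subst hln
      have hbd := oneLine_bounds w (i := 2) (by omega)
      exact ⟨hw1.symm, by omega, hbw2, by omega⟩
    · -- ℓ < n : use condition (ii) with m = a + 1
      unfold Pset at hw
      rw [if_neg hln] at hw
      simp only [Set.mem_setOf_eq] at hw
      obtain ⟨-, hw2cond⟩ := hw
      have hfactD : ∀ v, 1 ≤ v → v < a → q < posOfVal w v := by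
        intro v h1 h2
        obtain ⟨hvt, hvn, hval⟩ := hsmall v h1 h2
        have hne : posOfVal w v ≠ q := by
          intro h
          rw [h, hqval] at hval
          omega
        rcases lt_or_gt_of_ne hne with hlt | hgt
        · exfalso
          refine not_free_intro (i := 1) (j := posOfVal w v) (k := q) (by omega) hlt
            (by rw [olList_length]; omega) ?_ ?_ hfree
          · rw [olList_getD w _ hvn, olList_getD w q hqn, hval, hqval]
            omega
          · rw [olList_getD w q hqn, olList_getD w 1 (by omega), hqval, e12]
            omega
        · exact hgt
      have hfactC : ∀ u v, 1 ≤ u → u < v → v < a → posOfVal w v < posOfVal w u := by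
        intro u v h1 h2 h3
        obtain ⟨hut, hun, huval⟩ := hsmall u h1 (by omega)
        obtain ⟨hvt, hvn, hvval⟩ := hsmall v (by omega) h3
        have hne : posOfVal w u ≠ posOfVal w v := by
          intro h
          rw [h, hvval] at huval
          omega
        rcases lt_or_gt_of_ne hne with hlt | hgt
        · exfalso
          refine not_free_intro (i := 0) (j := posOfVal w u) (k := posOfVal w v) (by omega) hlt
            (by rw [olList_length]; omega) ?_ ?_ hfree
          · rw [olList_getD w _ hun, olList_getD w _ hvn, huval, hvval]
            omega
          · rw [olList_getD w _ hvn, olList_getD w 0 (by omega), hvval, e01, hw1]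
            omega
        · exact hgt
      have hfilter : (olList w).filter (fun v => v ≤ a + 1) = a :: (a + 1) :: descTo1 (a - 1) := by
        have hIdx : ((0 : ℕ) :: q :: (List.range (a - 1)).map (fun k => posOfVal w (a - 1 - k))).map
            (fun i => (olList w).getD i 0) = a :: (a + 1) :: descTo1 (a - 1) := by
          rw [List.map_cons, List.map_cons, List.map_map]
          congr 1
          · rw [olList_getD w 0 (by omega), e01, hw1]
          congr 1
          · rw [olList_getD w q hqn, hqval]
          · rw [descTo1_eq]
            apply List.map_congr_left
            intro k hk
            rw [List.mem_range] at hk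
            obtain ⟨-, hvn, hval⟩ := hsmall (a - 1 - k) (by omega) (by omega)
            simp only [Function.comp_apply]
            rw [olList_getD w _ hvn, hval]
        have hsub : (a :: (a + 1) :: descTo1 (a - 1)).Sublist (olList w) := by
          rw [← hIdx]
          apply getD_sublist
          · refine List.pairwise_cons.mpr ⟨?_, List.pairwise_cons.mpr ⟨?_, ?_⟩⟩
            · intro j hj
              rcases List.mem_cons.mp hj with rfl | hj
              · omega
              · rcases List.mem_map.mp hj with ⟨k, hk, rfl⟩
                rw [List.mem_range] at hk
                have := (hsmall (a - 1 - k) (by omega) (by omega)).1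
                omega
            · intro j hj
              rcases List.mem_map.mp hj with ⟨k, hk, rfl⟩
              rw [List.mem_range] at hk
              exact hfactD _ (by omega) (by omega)
            · refine List.pairwise_map.mpr (List.pairwise_lt_range.imp_of_mem ?_)
              intro k1 k2 hk1 hk2 hlt
              rw [List.mem_range] at hk1 hk2
              exact hfactC _ _ (by omega) (by omega) (by omega)
          · intro i hi
            rw [olList_length]
            rcases List.mem_cons.mp hi with rfl | hi
            · omega
            rcases List.mem_cons.mp hi with rfl | hi
            · omega
            rcases List.mem_map.mp hi with ⟨k, hk, rfl⟩
            rw [List.mem_range] at hk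
            exact (hsmall _ (by omega) (by omega)).2.1
        have hLfil : (a :: (a + 1) :: descTo1 (a - 1)).filter (fun v => v ≤ a + 1)
            = a :: (a + 1) :: descTo1 (a - 1) := by
          apply List.filter_eq_self.mpr
          intro x hx
          rcases List.mem_cons.mp hx with rfl | hx
          · simp
          rcases List.mem_cons.mp hx with rfl | hx
          · simp
          · have := mem_descTo1 hx
            simp only [decide_eq_true_eq]
            omega
        have hsub2 := List.Sublist.filter (fun v => decide (v ≤ a + 1)) hsub
        rw [hLfil] at hsub2
        have hlen : (a :: (a + 1) :: descTo1 (a - 1)).length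
            = ((olList w).filter (fun v => v ≤ a + 1)).length := by
          rw [filter_le_length w (a + 1) (by omega)]
          simp only [List.length_cons, descTo1_length]
          omega
        exact (hsub2.eq_of_length hlen).symm
      have hcond := hw2cond (a + 1) (by omega) (by omega)
        (by rw [show a + 1 - 1 = a by omega, show a + 1 - 2 = a - 1 by omega]; exact hfilter)
      exact Or.inl ⟨hw1.symm, by omega, hbw2, hcond.2.1⟩
  · -- the non-312-free case
    by_cases hln : ℓ = n
    · exfalso
      subst hln
      unfold Pset at hw
      rw [if_pos rfl] at hw
      simp only [Set.mem_setOf_eq] at hw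
      exact hfree hw
    unfold Pset at hw
    rw [if_neg hln] at hw
    simp only [Set.mem_setOf_eq] at hw
    obtain ⟨hcond1, -⟩ := hw
    obtain ⟨hl2, hl21, herased⟩ := hcond1 hfree
    right
    refine ⟨hl21, hl2, ?_⟩
    by_contra hane
    have hm2 := hmem 1 (by omega)
    rw [e12, hl2] at hm2
    have hbl : b ≤ ℓ := hsec _ hm2 hane
    have hw1a : oneLine w 1 ≠ a := by intro h; omega
    have hm0 := hmem 0 (by omega)
    rw [e01] at hm0
    have hbw1 : b ≤ oneLine w 1 := hsec _ hm0 hw1a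
    have hp0 : p ≠ 0 := by
      intro h
      rw [h, e01] at hpval
      exact hw1a hpval
    have hp1 : p ≠ 1 := by
      intro h
      rw [h, e12] at hpval
      rw [hpval] at hl2
      exact hane hl2.symm
    have hlen := olList_length w
    have hget0 : (olList w).getD 0 0 = oneLine w 1 := by
      rw [olList_getD w 0 (by omega), e01]
    have hget1 : (olList w).getD 1 0 = ℓ := by
      rw [olList_getD w 1 (by omega), e12, hl2]
    obtain ⟨x, y, r, hlr⟩ : ∃ x y r, olList w = x :: y :: r := by
      cases hol : olList w with
      | nil => rw [hol] at hlen; simp at hlen; omega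
      | cons x tl =>
        cases htl : tl with
        | nil => rw [hol, htl] at hlen; simp at hlen; omega
        | cons y r => exact ⟨x, y, r, rfl⟩
    rw [hlr] at hget0 hget1 hlen
    rw [List.getD_cons_zero] at hget0
    rw [show (1 : ℕ) = 0 + 1 from rfl, List.getD_cons_succ, List.getD_cons_zero] at hget1
    rw [List.length_cons, List.length_cons] at hlen
    rw [hget1] at hlr
    have hxl : ¬ (x == ℓ) = true := by
      simp only [beq_iff_eq]
      omega
    have herl : (olList w).erase ℓ = x :: r := by
      rw [hlr, List.erase_cons_tail hxl, List.erase_cons_head]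
    have hegd : ∀ j, 1 ≤ j → ((olList w).erase ℓ).getD j 0 = (olList w).getD (j + 1) 0 := by
      intro j hj
      rw [herl, hlr, List.getD_cons_succ, show j = (j - 1) + 1 by omega,
        List.getD_cons_succ, List.getD_cons_succ]
    have hegd0 : ((olList w).erase ℓ).getD 0 0 = oneLine w 1 := by
      rw [herl, List.getD_cons_zero]
      exact hget0
    have helen : ((olList w).erase ℓ).length = n - 1 := by
      rw [herl, List.length_cons]
      omega
    exact not_free_intro (l := (olList w).erase ℓ) (i := 0) (j := p - 1) (k := q - 1)
      (by omega) (by omega) (by rw [helen]; omega)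
      (by rw [hegd (p - 1) (by omega), hegd (q - 1) (by omega), show p - 1 + 1 = p by omega,
            show q - 1 + 1 = q by omega, olList_getD w p (by omega), olList_getD w q hqn,
            hpval, hqval]; omega)
      (by rw [hegd (q - 1) (by omega), show q - 1 + 1 = q by omega, olList_getD w q hqn,
            hqval, hegd0]; omega) herased
end

section
/- Let w ∈ S_n be a 312-free permutation. Let I = {i_1 < … < i_t} and J = {j_1 < … < j_s} be subsets of {1,…,n} with s ≤ t that form a two-column semi-standard Young tableau, i.e. i_r ≤ j_r for all 1 ≤ r ≤ s. Suppose I ≤ sort({w_1,…,w_t}) and J ≤ sort({w_1,…,w_s}). Then there exist permutations v_1, v_2 ∈ S_n with v_1 ≤ v_2 ≤ w in the Bruhat order such that {v_1(1),…,v_1(t)} = I and {v_2(1),…,v_2(s)} = J (i.e., the tableau [I J] has a defining chain whose last permutation is at most w, so it is standard for the Schubert variety X(w)). -/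
open MvPolynomial

/-- Bruhat order via the tableau criterion. -/
def bruhatLE {n : ℕ} (u v : Equiv.Perm (Fin n)) : Prop :=
  ∀ r, r ≤ n → finsetLE (initSet u r) (initSet v r)


/-! ### Auxiliary development for Statement 19 -/

namespace Stmt19Aux

open Finset List

variable {n : ℕ}

/-- number of elements of `X` that are `≥ v`. -/
def cnt (X : Finset (Fin n)) (v : Fin n) : ℕ := (X.filter (fun x => v ≤ x)).card

/-- number of elements of `X` that are `< v`. -/
def cntLt (X : Finset (Fin n)) (v : Fin n) : ℕ := (X.filter (fun x => x < v)).card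

/-- rank of `x` in `X`: number of elements of `X` below `x`. -/
def rk (X : Finset (Fin n)) (x : Fin n) : ℕ := (X.filter (fun y => y < x)).card

lemma cnt_add_cntLt (X : Finset (Fin n)) (v : Fin n) : cnt X v + cntLt X v = X.card := by
  classical
  have h2 : X.filter (fun x => x < v) = X.filter (fun x => ¬ v ≤ x) :=
    Finset.filter_congr (fun x _ => by simp [not_le])
  rw [cnt, cntLt, h2]
  exact Finset.card_filter_add_card_filter_not (p := fun x => v ≤ x)

lemma cnt_mono {X Y : Finset (Fin n)} (h : X ⊆ Y) (v : Fin n) : cnt X v ≤ cnt Y v :=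
  Finset.card_le_card (Finset.filter_subset_filter _ h)

lemma cntLt_mono {X Y : Finset (Fin n)} (h : X ⊆ Y) (v : Fin n) : cntLt X v ≤ cntLt Y v :=
  Finset.card_le_card (Finset.filter_subset_filter _ h)

lemma cnt_le_card (X : Finset (Fin n)) (v : Fin n) : cnt X v ≤ X.card :=
  Finset.card_le_card (Finset.filter_subset _ _)

lemma cnt_union_le (X Y : Finset (Fin n)) (v : Fin n) : cnt (X ∪ Y) v ≤ cnt X v + cnt Y v := by
  classical
  rw [cnt, cnt, cnt, Finset.filter_union]
  exact Finset.card_union_le _ _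

lemma cnt_union_of_disjoint {X Y : Finset (Fin n)} (h : Disjoint X Y) (v : Fin n) :
    cnt (X ∪ Y) v = cnt X v + cnt Y v := by
  classical
  rw [cnt, cnt, cnt, Finset.filter_union]
  exact Finset.card_union_of_disjoint (Finset.disjoint_filter_filter h)

/-! ### rank machinery -/

lemma rk_lt_card {X : Finset (Fin n)} {x : Fin n} (hx : x ∈ X) : rk X x < X.card := by
  have h : X.filter (fun y => y < x) ⊂ X := by
    refine Finset.ssubset_iff_of_subset (Finset.filter_subset _ _) |>.2 ⟨x, hx, ?_⟩
    simp
  exact Finset.card_lt_card h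

lemma rk_lt_rk {X : Finset (Fin n)} {x y : Fin n} (hx : x ∈ X) (hxy : x < y) :
    rk X x < rk X y := by
  have h : X.filter (fun z => z < x) ⊂ X.filter (fun z => z < y) := by
    refine Finset.ssubset_iff_of_subset
      (Finset.monotone_filter_right X (fun z _ hz => lt_trans hz hxy)) |>.2 ⟨x, ?_, ?_⟩
    · simp [hx, hxy]
    · simp
  exact Finset.card_lt_card h

lemma rk_injOn (X : Finset (Fin n)) : Set.InjOn (rk X) X := by
  intro x hx y hy hxy
  rcases lt_trichotomy x y with h | h | h
  · exact absurd hxy (Nat.ne_of_lt (rk_lt_rk hx h))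
  · exact h
  · exact absurd hxy.symm (Nat.ne_of_lt (rk_lt_rk hy h))

lemma image_rk (X : Finset (Fin n)) : X.image (rk X) = Finset.range X.card := by
  classical
  apply Finset.eq_of_subset_of_card_le
  · intro j hj
    simp only [Finset.mem_image] at hj
    obtain ⟨x, hx, rfl⟩ := hj
    simpa using rk_lt_card hx
  · rw [Finset.card_range, Finset.card_image_of_injOn (rk_injOn X)]

lemma card_filter_rk (X : Finset (Fin n)) (P : ℕ → Prop) [DecidablePred P] :
    (X.filter (fun x => P (rk X x))).card = ((Finset.range X.card).filter P).card := by
  classical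
  have h1 : ((X.filter (fun x => P (rk X x))).image (rk X)).card
      = (X.filter (fun x => P (rk X x))).card :=
    Finset.card_image_of_injOn ((rk_injOn X).mono (Finset.filter_subset _ _))
  rw [← h1, ← image_rk X, Finset.filter_image]

lemma le_iff_cntLt_le_rk {X : Finset (Fin n)} {x : Fin n} (hx : x ∈ X) (v : Fin n) :
    v ≤ x ↔ cntLt X v ≤ rk X x := by
  constructor
  · intro h
    exact Finset.card_le_card (Finset.monotone_filter_right X
      (fun z _ hz => lt_of_lt_of_le hz h))
  · intro h
    by_contra hc
    push_neg at hc
    have hsub : insert x (X.filter (fun z => z < x)) ⊆ X.filter (fun z => z < v) := by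
      intro z hz
      rcases Finset.mem_insert.1 hz with rfl | hz
      · exact Finset.mem_filter.2 ⟨hx, hc⟩
      · rcases Finset.mem_filter.1 hz with ⟨h1, h2⟩
        exact Finset.mem_filter.2 ⟨h1, lt_trans h2 hc⟩
    have h8 : rk X x + 1 ≤ cntLt X v := by
      have h9 := Finset.card_le_card hsub
      rwa [Finset.card_insert_of_notMem (by simp)] at h9
    omega
  
lemma cntGt_add {X : Finset (Fin n)} {x : Fin n} (hx : x ∈ X) :
    rk X x + ((X.filter (fun y => x < y)).card + 1) = X.card := by
  classical
  have h : X.filter (fun y => ¬ y < x) = insert x (X.filter (fun y => x < y)) := by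
    ext y
    simp only [Finset.mem_filter, Finset.mem_insert, not_lt]
    constructor
    · rintro ⟨hy, hxy⟩
      rcases eq_or_lt_of_le hxy with h | h
      · exact Or.inl h.symm
      · exact Or.inr ⟨hy, h⟩
    · rintro (rfl | ⟨hy, hxy⟩)
      · exact ⟨hx, le_refl _⟩
      · exact ⟨hy, le_of_lt hxy⟩
  have h2 := Finset.card_filter_add_card_filter_not (s := X) (p := fun y => y < x)
  rw [h, Finset.card_insert_of_notMem (by simp)] at h2
  exact h2

/-! ### top and bottom parts -/

/-- the `k` largest elements of `X`. -/
def topF (X : Finset (Fin n)) (k : ℕ) : Finset (Fin n) :=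
  X.filter (fun x => (X.filter (fun y => x < y)).card < k)

/-- the `r` smallest elements of `X`. -/
def botF (X : Finset (Fin n)) (r : ℕ) : Finset (Fin n) :=
  X.filter (fun x => rk X x < r)

lemma topF_subset (X : Finset (Fin n)) (k : ℕ) : topF X k ⊆ X := Finset.filter_subset _ _

lemma botF_subset (X : Finset (Fin n)) (r : ℕ) : botF X r ⊆ X := Finset.filter_subset _ _

lemma topF_zero (X : Finset (Fin n)) : topF X 0 = ∅ := by
  rw [topF]; apply Finset.filter_false_of_mem; intro x _; omega

lemma botF_mono (X : Finset (Fin n)) {r r' : ℕ} (h : r ≤ r') : botF X r ⊆ botF X r' :=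
  Finset.monotone_filter_right X (fun x _ hx => lt_of_lt_of_le hx h)

lemma cnt_topF (X : Finset (Fin n)) (k : ℕ) (v : Fin n) :
    cnt (topF X k) v = min k (cnt X v) := by
  classical
  have hcm : cnt X v + cntLt X v = X.card := cnt_add_cntLt X v
  have h1 : cnt (topF X k) v
      = (X.filter (fun x => cntLt X v ≤ rk X x ∧ X.card - 1 - rk X x < k)).card := by
    rw [cnt, topF, Finset.filter_filter]
    congr 1
    apply Finset.filter_congr
    intro x hx
    have e1 := cntGt_add hx
    have e2 := le_iff_cntLt_le_rk hx v
    constructor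
    · rintro ⟨hk, hvx⟩
      exact ⟨e2.1 hvx, by omega⟩
    · rintro ⟨hc, hk⟩
      have hrk := rk_lt_card hx
      exact ⟨by omega, e2.2 hc⟩
  rw [h1, card_filter_rk X (fun j => cntLt X v ≤ j ∧ X.card - 1 - j < k)]
  have h2 : (Finset.range X.card).filter (fun j => cntLt X v ≤ j ∧ X.card - 1 - j < k)
      = Finset.Ico (max (cntLt X v) (X.card - k)) X.card := by
    ext j
    simp only [Finset.mem_filter, Finset.mem_range, Finset.mem_Ico, max_le_iff]
    omega
  rw [h2, Nat.card_Ico]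
  omega

lemma cnt_botF (X : Finset (Fin n)) {r : ℕ} (hr : r ≤ X.card) (v : Fin n) :
    cnt (botF X r) v = r - cntLt X v := by
  classical
  have hcm : cnt X v + cntLt X v = X.card := cnt_add_cntLt X v
  have h1 : cnt (botF X r) v
      = (X.filter (fun x => rk X x < r ∧ cntLt X v ≤ rk X x)).card := by
    rw [cnt, botF, Finset.filter_filter]
    congr 1
    apply Finset.filter_congr
    intro x hx
    have e2 := le_iff_cntLt_le_rk hx v
    constructor
    · rintro ⟨hk, hvx⟩; exact ⟨hk, e2.1 hvx⟩
    · rintro ⟨hk, hc⟩; exact ⟨hk, e2.2 hc⟩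
  rw [h1, card_filter_rk X (fun j => j < r ∧ cntLt X v ≤ j)]
  have h2 : (Finset.range X.card).filter (fun j => j < r ∧ cntLt X v ≤ j)
      = Finset.Ico (cntLt X v) r := by
    ext j
    simp only [Finset.mem_filter, Finset.mem_range, Finset.mem_Ico]
    omega
  rw [h2, Nat.card_Ico]

lemma card_topF (X : Finset (Fin n)) (k : ℕ) : (topF X k).card = min k X.card := by
  classical
  have h1 : (topF X k).card = (X.filter (fun x => X.card - 1 - rk X x < k)).card := by
    rw [topF]
    congr 1
    apply Finset.filter_congr
    intro x hx
    have e1 := cntGt_add hx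
    constructor
    · intro hk; omega
    · intro hk; omega
  rw [h1, card_filter_rk X (fun j => X.card - 1 - j < k)]
  have h2 : (Finset.range X.card).filter (fun j => X.card - 1 - j < k)
      = Finset.Ico (X.card - k) X.card := by
    ext j
    simp only [Finset.mem_filter, Finset.mem_range, Finset.mem_Ico]
    omega
  rw [h2, Nat.card_Ico]
  omega

lemma card_botF (X : Finset (Fin n)) (r : ℕ) : (botF X r).card = min r X.card := by
  classical
  rw [botF, card_filter_rk X (fun j => j < r)]
  have h2 : (Finset.range X.card).filter (fun j => j < r) = Finset.range (min r X.card) := by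
    ext j
    simp only [Finset.mem_filter, Finset.mem_range, lt_min_iff]
    omega
  rw [h2, Finset.card_range]

lemma topF_chain {X X' : Finset (Fin n)} (h : X ⊆ X') (hc : X'.card ≤ X.card + 1) (k : ℕ) :
    topF X k ⊆ topF X' (k + 1) := by
  intro x hx
  rcases Finset.mem_filter.1 hx with ⟨hxX, hk⟩
  refine Finset.mem_filter.2 ⟨h hxX, ?_⟩
  have h1 : X'.filter (fun y => x < y) ⊆ (X.filter (fun y => x < y)) ∪ (X' \ X) := by
    intro y hy
    rcases Finset.mem_filter.1 hy with ⟨hy1, hy2⟩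
    by_cases hyX : y ∈ X
    · exact Finset.mem_union_left _ (Finset.mem_filter.2 ⟨hyX, hy2⟩)
    · exact Finset.mem_union_right _ (Finset.mem_sdiff.2 ⟨hy1, hyX⟩)
  have h2 := Finset.card_le_card h1
  have h3 := Finset.card_union_le (X.filter (fun y => x < y)) (X' \ X)
  have h4 : (X' \ X).card = X'.card - X.card := Finset.card_sdiff_of_subset h
  have h5 := Finset.card_le_card h
  omega

/-! ### basic facts about `initSet` -/

lemma card_le_n (A : Finset (Fin n)) : A.card ≤ n := by
  have := Finset.card_le_univ A
  simpa using this

lemma mem_initSet (w : Equiv.Perm (Fin n)) (r : ℕ) (b : Fin n) :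
    b ∈ initSet w r ↔ (w.symm b : ℕ) < r := by
  simp only [initSet, Finset.mem_image, Finset.mem_filter, Finset.mem_univ, true_and]
  constructor
  · rintro ⟨i, hi, rfl⟩; simpa using hi
  · intro h; exact ⟨w.symm b, h, w.apply_symm_apply b⟩

lemma initSet_zero (v : Equiv.Perm (Fin n)) : initSet v 0 = ∅ := by
  simp [initSet]

lemma initSet_succ (v : Equiv.Perm (Fin n)) {r : ℕ} (hr : r < n) :
    initSet v (r + 1) = insert (v ⟨r, hr⟩) (initSet v r) := by
  rw [initSet, initSet]
  have h : (Finset.univ.filter (fun i : Fin n => (i : ℕ) < r + 1))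
      = insert (⟨r, hr⟩ : Fin n) (Finset.univ.filter (fun i : Fin n => (i : ℕ) < r)) := by
    ext i
    simp only [Finset.mem_filter, Finset.mem_univ, true_and, Finset.mem_insert]
    constructor
    · intro h1
      rcases Nat.lt_succ_iff_lt_or_eq.1 h1 with h2 | h2
      · exact Or.inr h2
      · exact Or.inl (Fin.ext h2)
    · rintro (rfl | h2)
      · simp
      · omega
  rw [h, Finset.image_insert]

lemma self_not_mem_initSet (v : Equiv.Perm (Fin n)) {r : ℕ} (hr : r < n) :
    v ⟨r, hr⟩ ∉ initSet v r := by
  rw [mem_initSet]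
  simp

lemma initSet_mono (v : Equiv.Perm (Fin n)) {r r' : ℕ} (h : r ≤ r') :
    initSet v r ⊆ initSet v r' := by
  intro b hb
  rw [mem_initSet] at hb ⊢
  omega

lemma card_initSet (v : Equiv.Perm (Fin n)) : ∀ r, r ≤ n → (initSet v r).card = r := by
  intro r
  induction r with
  | zero => intro _; rw [initSet_zero]; rfl
  | succ r ih =>
      intro h
      have hr : r < n := h
      rw [initSet_succ v hr,
        Finset.card_insert_of_notMem (self_not_mem_initSet v hr), ih (by omega)]

/-! ### translation of the 312-free hypothesis -/

lemma getD_olList (w : Equiv.Perm (Fin n)) (i : Fin n) :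
    (olList w).getD (i : ℕ) 0 = (w i : ℕ) + 1 := by
  rw [olList]
  rw [List.getD_eq_getElem _ _ (by simpa using i.isLt)]
  simp

lemma no312 (w : Equiv.Perm (Fin n)) (hw : List312Free (olList w)) :
    ∀ i j k : Fin n, i < j → j < k → w j < w k → w k < w i → False := by
  intro i j k hij hjk h1 h2
  apply hw
  refine ⟨(i : ℕ), (j : ℕ), (k : ℕ), hij, hjk, ?_, ?_, ?_⟩
  · rw [olList, List.length_map, List.length_finRange]; exact k.isLt
  · rw [getD_olList, getD_olList]
    have := (Fin.lt_iff_val_lt_val).1 h1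
    omega
  · rw [getD_olList, getD_olList]
    have := (Fin.lt_iff_val_lt_val).1 h2
    omega

/-! ### key 312 lemma -/

lemma lemY (w : Equiv.Perm (Fin n))
    (h312 : ∀ i j k : Fin n, i < j → j < k → w j < w k → w k < w i → False)
    {A : Finset (Fin n)}
    (hA : ∀ u, cnt A u ≤ cnt (initSet w A.card) u)
    {r : ℕ} (hsr : A.card ≤ r) (hrn : r ≤ n) {b : Fin n} (hbA : b ∈ A)
    (hbW : b ∉ initSet w r) {v : Fin n} (hv : v ≤ b) :
    cnt (initSet w r) v = cnt (initSet w A.card) v + (r - A.card) := by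
  classical
  have h1 : 1 ≤ cnt A b := by
    rw [cnt]
    have : b ∈ A.filter (fun x => b ≤ x) := Finset.mem_filter.2 ⟨hbA, le_refl _⟩
    exact Finset.card_pos.2 ⟨b, this⟩
  have h2 : 0 < cnt (initSet w A.card) b := lt_of_lt_of_le h1 (hA b)
  rw [cnt] at h2
  obtain ⟨x, hx⟩ := Finset.card_pos.1 h2
  rcases Finset.mem_filter.1 hx with ⟨hxW, hbx⟩
  have hbWs : b ∉ initSet w A.card := fun hmem => hbW (initSet_mono w hsr hmem)
  have hbx' : b < x := lt_of_le_of_ne hbx (fun he => hbWs (he ▸ hxW))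
  have hi0r : ((w.symm x : Fin n) : ℕ) < A.card := (mem_initSet w A.card x).1 hxW
  have key : ∀ (i : ℕ) (h : i < n), A.card ≤ i → i < r → b < w ⟨i, h⟩ := by
    intro i h hsi hir
    have hkb : r ≤ (w.symm b : ℕ) := by
      rw [mem_initSet] at hbW; omega
    have hne : w ⟨i, h⟩ ≠ b := by
      intro he
      have h3 : w.symm b = ⟨i, h⟩ := by rw [← he]; simp
      rw [h3] at hkb
      simp at hkb
      omega
    rcases lt_or_gt_of_ne hne with hlt | hgt
    · exfalso
      refine h312 (w.symm x) ⟨i, h⟩ (w.symm b) ?_ ?_ ?_ ?_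
      · rw [Fin.lt_iff_val_lt_val]; simp only [Fin.val_mk]; omega
      · rw [Fin.lt_iff_val_lt_val]; simp only [Fin.val_mk]; omega
      · rw [Equiv.apply_symm_apply]; exact hlt
      · rw [Equiv.apply_symm_apply, Equiv.apply_symm_apply]; exact hbx'
    · exact hgt
  have main : ∀ m, A.card ≤ m → m ≤ r →
      cnt (initSet w m) v = cnt (initSet w A.card) v + (m - A.card) := by
    intro m
    induction m with
    | zero =>
        intro h1' _
        have : A.card = 0 := by omega
        rw [this]
        simp
    | succ m ih =>
        intro hsm hmr
        by_cases hc : A.card ≤ m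
        · have hmn : m < n := by omega
          have hkey := key m hmn hc (by omega)
          have hvm : v ≤ w ⟨m, hmn⟩ := le_of_lt (lt_of_le_of_lt hv hkey)
          have hnew := self_not_mem_initSet w hmn
          rw [cnt, initSet_succ w hmn, Finset.filter_insert, if_pos hvm,
            Finset.card_insert_of_notMem (fun hmm => hnew (Finset.filter_subset _ _ hmm))]
          rw [← cnt, ih hc (by omega)]
          omega
        · have h4 : A.card = m + 1 := by omega
          rw [← h4]
          omega
  exact main r hsr (le_refl r)

/-! ### claim 2 : dominance of the extended column -/

lemma cnt_decomp (W A : Finset (Fin n)) (v : Fin n) :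
    cnt W v ≤ cnt (W ∩ A) v + cnt (W \ A) v := by
  classical
  have h : W = (W ∩ A) ∪ (W \ A) := by
    ext x
    simp only [Finset.mem_union, Finset.mem_inter, Finset.mem_sdiff]
    tauto
  calc cnt W v = cnt ((W ∩ A) ∪ (W \ A)) v := by rw [← h]
    _ ≤ _ := cnt_union_le _ _ v

lemma claim2 (w : Equiv.Perm (Fin n))
    (h312 : ∀ i j k : Fin n, i < j → j < k → w j < w k → w k < w i → False)
    {A : Finset (Fin n)} (hA : ∀ u, cnt A u ≤ cnt (initSet w A.card) u)
    {r : ℕ} (hsr : A.card ≤ r) (hrn : r ≤ n) (v : Fin n) :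
    cnt (A ∪ topF (initSet w r \ A) (r - A.card)) v ≤ cnt (initSet w r) v := by
  classical
  have hdisj : Disjoint A (topF (initSet w r \ A) (r - A.card)) := by
    refine Finset.disjoint_left.2 (fun x hxA hxT => ?_)
    exact (Finset.mem_sdiff.1 (topF_subset _ _ hxT)).2 hxA
  rw [cnt_union_of_disjoint hdisj, cnt_topF]
  by_cases hb : ∃ b ∈ A, v ≤ b ∧ b ∉ initSet w r
  · obtain ⟨b, hbA, hvb, hbW⟩ := hb
    have h1 := lemY w h312 hA hsr hrn hbA hbW hvb
    have h2 := hA v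
    have h3 := min_le_left (r - A.card) (cnt (initSet w r \ A) v)
    omega
  · push_neg at hb
    have h4 : cnt A v ≤ cnt (initSet w r ∩ A) v := by
      rw [cnt, cnt]
      apply Finset.card_le_card
      intro x hx
      rcases Finset.mem_filter.1 hx with ⟨hx1, hx2⟩
      exact Finset.mem_filter.2 ⟨Finset.mem_inter.2 ⟨hb x hx1 hx2, hx1⟩, hx2⟩
    have h5 := cnt_decomp (initSet w r) A v
    have h6 := min_le_right (r - A.card) (cnt (initSet w r \ A) v)
    -- note: cnt (W∩A) + cnt (W\A) can overcount?  no: we need the reverse bound: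
    have h7 : cnt (initSet w r ∩ A) v + cnt (initSet w r \ A) v ≤ cnt (initSet w r) v := by
      have hdisj2 : Disjoint (initSet w r ∩ A) (initSet w r \ A) := by
        refine Finset.disjoint_left.2 (fun x hx1 hx2 => ?_)
        exact (Finset.mem_sdiff.1 hx2).2 (Finset.mem_inter.1 hx1).2
      rw [← cnt_union_of_disjoint hdisj2]
      apply cnt_mono
      intro x hx
      rcases Finset.mem_union.1 hx with h | h
      · exact (Finset.mem_inter.1 h).1
      · exact (Finset.mem_sdiff.1 h).1
    omega

/-! ### the flags -/

/-- the canonical flag through `A` dominated by the flag of `w`. -/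
def Tflag (w : Equiv.Perm (Fin n)) (A : Finset (Fin n)) (r : ℕ) : Finset (Fin n) :=
  if r < A.card then botF A r else A ∪ topF (initSet w r \ A) (r - A.card)

lemma disj_topF (w : Equiv.Perm (Fin n)) (A : Finset (Fin n)) (r k : ℕ) :
    Disjoint A (topF (initSet w r \ A) k) := by
  refine Finset.disjoint_left.2 (fun x hxA hxT => ?_)
  exact (Finset.mem_sdiff.1 (topF_subset _ _ hxT)).2 hxA

lemma Tflag_self (w : Equiv.Perm (Fin n)) (A : Finset (Fin n)) :
    Tflag w A A.card = A := by
  rw [Tflag, if_neg (lt_irrefl _), Nat.sub_self, topF_zero, Finset.union_empty]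

lemma card_sdiff_ge (w : Equiv.Perm (Fin n)) (A : Finset (Fin n)) {r : ℕ} (hrn : r ≤ n) :
    r - A.card ≤ (initSet w r \ A).card := by
  have h := Finset.le_card_sdiff A (initSet w r)
  rw [card_initSet w r hrn] at h
  exact h

lemma Tflag_card (w : Equiv.Perm (Fin n)) (A : Finset (Fin n)) {r : ℕ} (hrn : r ≤ n) :
    (Tflag w A r).card = r := by
  rw [Tflag]
  split_ifs with h
  · rw [card_botF]; omega
  · push_neg at h
    rw [Finset.card_union_of_disjoint (disj_topF w A r _), card_topF]
    have h1 := card_sdiff_ge w A hrn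
    omega

lemma Tflag_chain (w : Equiv.Perm (Fin n)) (A : Finset (Fin n)) {r : ℕ} (hrn : r + 1 ≤ n) :
    Tflag w A r ⊆ Tflag w A (r + 1) := by
  by_cases h1 : r + 1 < A.card
  · rw [Tflag, Tflag, if_pos h1, if_pos (by omega)]
    exact botF_mono A (by omega)
  · conv_rhs => rw [Tflag]
    rw [if_neg h1]
    by_cases h2 : r < A.card
    · rw [Tflag, if_pos h2]
      exact subset_trans (botF_subset A r) Finset.subset_union_left
    · rw [Tflag, if_neg h2]
      push_neg at h2
      have hx : initSet w r \ A ⊆ initSet w (r + 1) \ A :=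
        Finset.sdiff_subset_sdiff (initSet_mono w (by omega)) (le_refl _)
      have hcard : (initSet w (r + 1) \ A).card ≤ (initSet w r \ A).card + 1 := by
        have hsub : initSet w (r + 1) \ A ⊆ insert (w ⟨r, hrn⟩) (initSet w r \ A) := by
          intro y hy
          rcases Finset.mem_sdiff.1 hy with ⟨hy1, hy2⟩
          rw [initSet_succ w hrn] at hy1
          rcases Finset.mem_insert.1 hy1 with h | h
          · exact h ▸ Finset.mem_insert_self _ _
          · exact Finset.mem_insert_of_mem (Finset.mem_sdiff.2 ⟨h, hy2⟩)
        calc (initSet w (r + 1) \ A).card ≤ _ := Finset.card_le_card hsub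
          _ ≤ (initSet w r \ A).card + 1 := Finset.card_insert_le _ _
      have hk : r + 1 - A.card = (r - A.card) + 1 := by omega
      rw [hk]
      exact Finset.union_subset_union_right (topF_chain hx hcard _)

lemma dom_Tflag (w : Equiv.Perm (Fin n))
    (h312 : ∀ i j k : Fin n, i < j → j < k → w j < w k → w k < w i → False)
    {A : Finset (Fin n)} (hA : ∀ u, cnt A u ≤ cnt (initSet w A.card) u)
    {r : ℕ} (hrn : r ≤ n) (v : Fin n) :
    cnt (Tflag w A r) v ≤ cnt (initSet w r) v := by
  rw [Tflag]
  split_ifs with h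
  · have hAn := card_le_n A
    rw [cnt_botF A (le_of_lt h) v]
    have h1 : cnt (initSet w r) v + cntLt (initSet w r) v = r := by
      have := cnt_add_cntLt (initSet w r) v
      rw [card_initSet w r hrn] at this
      exact this
    have h2 : cnt (initSet w A.card) v + cntLt (initSet w A.card) v = A.card := by
      have := cnt_add_cntLt (initSet w A.card) v
      rw [card_initSet w A.card hAn] at this
      exact this
    have h3 := cnt_add_cntLt A v
    have h4 := hA v
    have h5 := cntLt_mono (initSet_mono w (le_of_lt h) (r' := A.card)) v
    omega
  · exact claim2 w h312 hA (by omega) hrn v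

lemma ge_Tflag (w : Equiv.Perm (Fin n)) {A : Finset (Fin n)}
    {r : ℕ} (hsr : A.card ≤ r) (hrn : r ≤ n) (v : Fin n) :
    min (cnt A v + (r - A.card)) (cnt (initSet w r) v) ≤ cnt (Tflag w A r) v := by
  classical
  rw [Tflag, if_neg (by omega)]
  rw [cnt_union_of_disjoint (disj_topF w A r _), cnt_topF]
  rcases le_or_gt (r - A.card) (cnt (initSet w r \ A) v) with h | h
  · rw [min_eq_left h]
    exact le_trans (min_le_left _ _) (le_refl _)
  · rw [min_eq_right (le_of_lt h)]
    have h5 := cnt_decomp (initSet w r) A v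
    have h6 : cnt (initSet w r ∩ A) v ≤ cnt A v := cnt_mono Finset.inter_subset_right v
    have h7 := min_le_right (cnt A v + (r - A.card)) (cnt (initSet w r) v)
    omega

lemma ST (w : Equiv.Perm (Fin n))
    (h312 : ∀ i j k : Fin n, i < j → j < k → w j < w k → w k < w i → False)
    {I J : Finset (Fin n)}
    (hIc : ∀ u, cnt I u ≤ cnt (initSet w I.card) u)
    (hJc : ∀ u, cnt J u ≤ cnt (initSet w J.card) u)
    (hK1 : ∀ u, cntLt J u ≤ min J.card (cntLt I u))
    (hst : J.card ≤ I.card) {r : ℕ} (hrn : r ≤ n) (v : Fin n) :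
    cnt (Tflag w I r) v ≤ cnt (Tflag w J r) v := by
  classical
  have htn := card_le_n I
  have hsn := card_le_n J
  have hsumI := cnt_add_cntLt I v
  have hsumJ := cnt_add_cntLt J v
  have hK := hK1 v
  have hK1' : cntLt J v ≤ J.card := le_trans hK (min_le_left _ _)
  have hK2' : cntLt J v ≤ cntLt I v := le_trans hK (min_le_right _ _)
  by_cases hrt : r < I.card
  · conv_lhs => rw [Tflag]
    rw [if_pos hrt, cnt_botF I (le_of_lt hrt) v]
    have hWtI : cntLt (initSet w I.card) v ≤ cntLt I v := by
      have h2 : cnt (initSet w I.card) v + cntLt (initSet w I.card) v = I.card := by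
        have := cnt_add_cntLt (initSet w I.card) v
        rw [card_initSet w I.card htn] at this
        exact this
      have h4 := hIc v
      omega
    by_cases hrs : r < J.card
    · rw [Tflag, if_pos hrs, cnt_botF J (le_of_lt hrs) v]
      omega
    · push_neg at hrs
      have hge := ge_Tflag w (A := J) hrs hrn v
      have hWr : cnt (initSet w r) v + cntLt (initSet w r) v = r := by
        have := cnt_add_cntLt (initSet w r) v
        rw [card_initSet w r hrn] at this
        exact this
      have hWrt : cntLt (initSet w r) v ≤ cntLt (initSet w I.card) v :=
        cntLt_mono (initSet_mono w (le_of_lt hrt)) v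
      rw [min_def] at hge
      split_ifs at hge <;> omega
  · push_neg at hrt
    have hLHS1 : cnt (Tflag w I r) v ≤ cnt I v + (r - I.card) := by
      rw [Tflag, if_neg (by omega), cnt_union_of_disjoint (disj_topF w I r _), cnt_topF]
      have := min_le_left (r - I.card) (cnt (initSet w r \ I) v)
      omega
    have hLHS2 : cnt (Tflag w I r) v ≤ cnt (initSet w r) v := dom_Tflag w h312 hIc hrn v
    have hge := ge_Tflag w (A := J) (le_trans hst hrt) hrn v
    rw [min_def] at hge
    split_ifs at hge <;> omega

/-! ### bridge between componentwise domination and counts -/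

lemma counts_of_forall2 {l₁ l₂ : List (Fin n)} (h : List.Forall₂ (· ≤ ·) l₁ l₂) (v : Fin n) :
    l₁.countP (fun x => decide (v ≤ x)) ≤ l₂.countP (fun x => decide (v ≤ x)) := by
  induction h with
  | nil => simp
  | @cons a b l1 l2 hab _ ih =>
      rw [List.countP_cons, List.countP_cons]
      by_cases hva : v ≤ a
      · have hvb : v ≤ b := le_trans hva hab
        rw [decide_eq_true hva, decide_eq_true hvb]
        simp only [if_true]
        omega
      · rw [decide_eq_false hva]
        simp only [Bool.false_eq_true, if_false]
        have := Nat.le_add_right (l2.countP (fun x => decide (v ≤ x)))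
          (if (decide (v ≤ b) : Bool) = true then 1 else 0)
        omega

lemma forall2_of_counts : ∀ (l₁ l₂ : List (Fin n)), l₁.Pairwise (· < ·) → l₂.Pairwise (· < ·) →
    l₁.length = l₂.length →
    (∀ v, l₁.countP (fun x => decide (v ≤ x)) ≤ l₂.countP (fun x => decide (v ≤ x))) →
    List.Forall₂ (· ≤ ·) l₁ l₂
  | [], [], _, _, _, _ => List.Forall₂.nil
  | [], b :: l₂, _, _, hlen, _ => by simp at hlen
  | a :: l₁, [], _, _, hlen, _ => by simp at hlen
  | a :: l₁, b :: l₂, h₁, h₂, hlen, hcnt => by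
      have hall2 : ∀ x ∈ b :: l₂, a ≤ x := by
        have h4 : (a :: l₁).countP (fun x => decide (a ≤ x)) = (a :: l₁).length := by
          rw [List.countP_eq_length]
          intro x hx
          rcases List.mem_cons.1 hx with rfl | hx
          · simp
          · simpa using le_of_lt (List.rel_of_pairwise_cons h₁ hx)
        have h5 := hcnt a
        rw [h4, hlen] at h5
        have h6 := List.countP_le_length (l := b :: l₂) (p := fun x => decide (a ≤ x))
        have h7 : (b :: l₂).countP (fun x => decide (a ≤ x)) = (b :: l₂).length := by omega
        rw [List.countP_eq_length] at h7
        intro x hx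
        simpa using h7 x hx
      have hab : a ≤ b := hall2 b (List.mem_cons_self (a := b) (l := l₂))
      refine List.Forall₂.cons hab (forall2_of_counts l₁ l₂ h₁.of_cons h₂.of_cons
        (by simpa using hlen) ?_)
      intro v
      by_cases hv : v ≤ b
      · have hr : l₂.countP (fun x => decide (v ≤ x)) = l₂.length := by
          rw [List.countP_eq_length]
          intro x hx
          simpa using le_trans hv (le_of_lt (List.rel_of_pairwise_cons h₂ hx))
        have h6 := List.countP_le_length (l := l₁) (p := fun x => decide (v ≤ x))
        have hlen' : l₁.length = l₂.length := by simpa using hlen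
        omega
      · have h6 := hcnt v
        rw [List.countP_cons, List.countP_cons] at h6
        have hb : (decide (v ≤ b) : Bool) = false := decide_eq_false hv
        rw [hb] at h6
        simp only [Bool.false_eq_true, if_false] at h6
        have := Nat.le_add_right (l₁.countP (fun x => decide (v ≤ x)))
          (if (decide (v ≤ a) : Bool) = true then 1 else 0)
        omega

lemma countP_sort (X : Finset (Fin n)) (p : Fin n → Prop) [DecidablePred p] :
    (X.sort (· ≤ ·)).countP (fun x => decide (p x)) = (X.filter p).card := by
  classical
  rw [(Finset.sort_perm_toList (s := X) (r := (· ≤ ·))).countP_eq]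
  rw [Finset.toList]
  rw [← Multiset.coe_countP]
  rw [Multiset.coe_toList]
  rw [Multiset.countP_eq_card_filter]
  rfl

lemma counts_of_finsetLE {A B : Finset (Fin n)} (h : finsetLE A B) (v : Fin n) :
    cnt A v ≤ cnt B v := by
  have h1 := counts_of_forall2 h v
  rw [countP_sort A (fun x => v ≤ x), countP_sort B (fun x => v ≤ x)] at h1
  exact h1

lemma finsetLE_of_counts {A B : Finset (Fin n)} (hcard : A.card = B.card)
    (h : ∀ v, cnt A v ≤ cnt B v) : finsetLE A B := by
  apply forall2_of_counts _ _ (Finset.sortedLT_sort A).pairwise (Finset.sortedLT_sort B).pairwise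
  · rw [Finset.length_sort, Finset.length_sort, hcard]
  · intro v
    rw [countP_sort A (fun x => v ≤ x), countP_sort B (fun x => v ≤ x)]
    exact h v

/-! ### extracting counts from the SSYT hypothesis -/

lemma countP_take_sorted {v : Fin n} : ∀ {l : List (Fin n)}, l.Pairwise (· ≤ ·) → ∀ (r : ℕ),
    (l.take r).countP (fun x => decide (x < v)) = min r (l.countP (fun x => decide (x < v))) := by
  intro l
  induction l with
  | nil => intro _ r; simp
  | cons a t ih =>
      intro h r
      cases r with
      | zero => simp
      | succ r =>
          rw [List.take_succ_cons, List.countP_cons, List.countP_cons]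
          by_cases ha : a < v
          · rw [ih h.of_cons r, decide_eq_true ha]
            simp only [if_true]
            omega
          · have h0 : t.countP (fun x => decide (x < v)) = 0 := by
              rw [List.countP_eq_zero]
              intro x hx
              simpa using fun hxv => ha (lt_of_le_of_lt (List.rel_of_pairwise_cons h hx) hxv)
            have h0' : (t.take r).countP (fun x => decide (x < v)) = 0 := by
              have := List.Sublist.countP_le (p := fun x => decide (x < v)) (List.take_sublist r t)
              omega
            rw [decide_eq_false ha]
            simp only [Bool.false_eq_true, if_false]
            omega

lemma K1_of_SSYT {I J : Finset (Fin n)}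
    (h : List.Forall₂ (· ≤ ·) ((I.sort (· ≤ ·)).take J.card) (J.sort (· ≤ ·)))
    (hst : J.card ≤ I.card) (v : Fin n) :
    cntLt J v ≤ min J.card (cntLt I v) := by
  classical
  have h1 := counts_of_forall2 h v
  rw [countP_sort J (fun x => v ≤ x)] at h1
  have hlen : ((I.sort (· ≤ ·)).take J.card).length = J.card := by
    rw [List.length_take, Finset.length_sort]
    omega
  have h2 : ((I.sort (· ≤ ·)).take J.card).countP (fun x => decide (x < v))
      = min J.card (cntLt I v) := by
    rw [countP_take_sorted (Finset.pairwise_sort (s := I) (r := (· ≤ ·))) J.card]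
    rw [countP_sort I (fun x => x < v)]
    rfl
  have h3 := List.length_eq_countP_add_countP (fun x => decide (x < v))
    (l := (I.sort (· ≤ ·)).take J.card)
  have h4 : ((I.sort (· ≤ ·)).take J.card).countP (fun a => !decide (a < v))
      = ((I.sort (· ≤ ·)).take J.card).countP (fun a => decide (v ≤ a)) := by
    apply List.countP_congr
    intro a _
    by_cases hav : a < v
    · simp [hav, not_le.2 hav]
    · simp [hav, not_lt.1 hav]
  have h5 := cnt_add_cntLt J v
  have h6 : ((I.sort (· ≤ ·)).take J.card).countP (fun a => decide ¬ (decide (a < v) = true))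
      = ((I.sort (· ≤ ·)).take J.card).countP (fun a => decide (v ≤ a)) := by
    apply List.countP_congr
    intro a _
    by_cases hav : a < v
    · simp [hav, not_le.2 hav]
    · simp [hav, not_lt.1 hav]
  have h1' : ((I.sort (· ≤ ·)).take J.card).countP (fun x => decide (v ≤ x)) ≤ cnt J v := h1
  rw [hlen, h2, h6] at h3
  have hminle2 : min J.card (cntLt I v) ≤ cntLt I v := min_le_right _ _
  apply le_min
  · omega
  · omega

/-! ### building a permutation from a complete flag -/

lemma exists_perm (C : ℕ → Finset (Fin n)) (hcard : ∀ r, r ≤ n → (C r).card = r)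
    (hchain : ∀ r, r + 1 ≤ n → C r ⊆ C (r + 1)) :
    ∃ v : Equiv.Perm (Fin n), ∀ r, r ≤ n → initSet v r = C r := by
  classical
  have hmono : ∀ r r', r ≤ r' → r' ≤ n → C r ⊆ C r' := by
    intro r r' h h'
    induction r' with
    | zero => have : r = 0 := by omega
              rw [this]
    | succ m ih =>
        rcases Nat.lt_or_ge r (m + 1) with h2 | h2
        · exact subset_trans (ih (by omega) (by omega)) (hchain m h')
        · have : r = m + 1 := by omega
          rw [this]
  have hdiff : ∀ i : Fin n, (C ((i : ℕ) + 1) \ C i).Nonempty := by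
    intro i
    have h1 := hcard i (le_of_lt i.isLt)
    have h2 := hcard ((i : ℕ) + 1) i.isLt
    have h3 := hchain i i.isLt
    have h4 := Finset.card_sdiff_of_subset h3
    rw [← Finset.card_pos]
    omega
  set g : Fin n → Fin n := fun i => (C ((i : ℕ) + 1) \ C i).min' (hdiff i) with hg
  have hgmem : ∀ i : Fin n, g i ∈ C ((i : ℕ) + 1) ∧ g i ∉ C i := by
    intro i
    have := Finset.min'_mem _ (hdiff i)
    rw [Finset.mem_sdiff] at this
    exact this
  have hinj : Function.Injective g := by
    intro i j hij
    by_contra hne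
    rcases lt_or_gt_of_ne hne with h | h
    · have h1 : g i ∈ C j := hmono ((i : ℕ) + 1) j h (le_of_lt j.isLt) (hgmem i).1
      rw [hij] at h1
      exact (hgmem j).2 h1
    · have h1 : g j ∈ C i := hmono ((j : ℕ) + 1) i h (le_of_lt i.isLt) (hgmem j).1
      rw [← hij] at h1
      exact (hgmem i).2 h1
  have hbij := Finite.injective_iff_bijective.1 hinj
  refine ⟨Equiv.ofBijective g hbij, ?_⟩
  intro r
  induction r with
  | zero =>
      intro _
      rw [initSet_zero]
      symm
      rw [← Finset.card_eq_zero]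
      exact hcard 0 (Nat.zero_le n)
  | succ r ih =>
      intro hr
      have hrn : r < n := hr
      rw [initSet_succ _ hrn, ih (by omega)]
      have h1 : (Equiv.ofBijective g hbij) ⟨r, hrn⟩ = g ⟨r, hrn⟩ := rfl
      rw [h1]
      apply Finset.eq_of_subset_of_card_le
      · intro x hx
        rcases Finset.mem_insert.1 hx with rfl | hx
        · exact (hgmem ⟨r, hrn⟩).1
        · exact hchain r hr hx
      · rw [hcard (r + 1) hr,
          Finset.card_insert_of_notMem (hgmem ⟨r, hrn⟩).2, hcard r (by omega)]


end Stmt19Aux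

theorem stmt19 (n : ℕ) (w : Equiv.Perm (Fin n)) (hw : List312Free (olList w))
    (I J : Finset (Fin n)) (hst : J.card ≤ I.card)
    (hSSYT : List.Forall₂ (· ≤ ·) ((I.sort (· ≤ ·)).take J.card) (J.sort (· ≤ ·)))
    (hI : finsetLE I (initSet w I.card)) (hJ : finsetLE J (initSet w J.card)) :
    ∃ v₁ v₂ : Equiv.Perm (Fin n), bruhatLE v₁ v₂ ∧ bruhatLE v₂ w ∧
      initSet v₁ I.card = I ∧ initSet v₂ J.card = J := by
  classical
  open Stmt19Aux in
  have h312 := no312 w hw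
  have htn := card_le_n I
  have hsn := card_le_n J
  have hIc : ∀ u, cnt I u ≤ cnt (initSet w I.card) u := counts_of_finsetLE hI
  have hJc : ∀ u, cnt J u ≤ cnt (initSet w J.card) u := counts_of_finsetLE hJ
  have hK1 : ∀ u, cntLt J u ≤ min J.card (cntLt I u) := K1_of_SSYT hSSYT hst
  obtain ⟨v₁, hv₁⟩ := exists_perm (Tflag w I) (fun r hr => Tflag_card w I hr)
    (fun r hr => Tflag_chain w I hr)
  obtain ⟨v₂, hv₂⟩ := exists_perm (Tflag w J) (fun r hr => Tflag_card w J hr)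
    (fun r hr => Tflag_chain w J hr)
  refine ⟨v₁, v₂, ?_, ?_, ?_, ?_⟩
  · intro r hr
    rw [hv₁ r hr, hv₂ r hr]
    exact finsetLE_of_counts (by rw [Tflag_card w I hr, Tflag_card w J hr])
      (fun v => ST w h312 hIc hJc hK1 hst hr v)
  · intro r hr
    rw [hv₂ r hr]
    exact finsetLE_of_counts (by rw [Tflag_card w J hr, card_initSet w r hr])
      (fun v => dom_Tflag w h312 hJc hr v)
  · rw [hv₁ I.card htn, Tflag_self]
  · rw [hv₂ J.card hsn, Tflag_self]
end
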